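/- The objective function H(s) = ∫_F R(x)·P(x,s) dx decomposes as H(s) = H_i(s) + H̃(s̄_i), where H_i(s) = ∫_{V(s_i)} R(x)·Φ_i(x)·p_i(x,s_i) dx depends on s_i, and H̃(s̄_i) = ∫_F R(x)·(1 - ∏_{k≠i}(1 - p̂_k(x,s_k))) dx is independent of s_i. -/

import Mathlib

open MeasureTheory

/-- H(s) = H_i(s) + H̃(s̄_i). -/
theorem stmt_1 (N : ℕ) (i : Fin N)
    (F V : Set (ℝ × ℝ)) (hF : MeasurableSet F) (hV : MeasurableSet V) (hVF : V ⊆ F)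
    (R : ℝ × ℝ → ℝ) (hR : ∀ x, 0 ≤ R x)
    (phat : Fin N → (ℝ × ℝ) → ℝ) (hp : ∀ k x, phat k x ∈ Set.Icc (0:ℝ) 1)
    (pi : (ℝ × ℝ) → ℝ)
    (hvis : ∀ x ∈ V, phat i x = pi x)
    (hinv : ∀ x ∈ F \ V, phat i x = 0)
    (B C : Finset (Fin N)) (hiB : i ∉ B) (hC : C = Finset.univ \ insert i B)
    (hCzero : ∀ x ∈ V, ∀ j ∈ C, phat j x = 0)
    (hint1 : IntegrableOn (fun x => R x * (1 - ∏ k, (1 - phat k x))) F)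
    (hint2 : IntegrableOn (fun x => R x * (∏ k ∈ B, (1 - phat k x)) * pi x) V)
    (hint3 : IntegrableOn
      (fun x => R x * (1 - ∏ k ∈ Finset.univ.erase i, (1 - phat k x))) F) :
    ∫ x in F, R x * (1 - ∏ k, (1 - phat k x)) =
      (∫ x in V, R x * (∏ k ∈ B, (1 - phat k x)) * pi x) +
      ∫ x in F, R x * (1 - ∏ k ∈ Finset.univ.erase i, (1 - phat k x)) := by
  set g : (ℝ × ℝ) → ℝ :=
    fun x => R x * (∏ k ∈ Finset.univ.erase i, (1 - phat k x)) * phat i x with hg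
  -- pointwise identity: f1 = g + f3
  have hpt : ∀ x, R x * (1 - ∏ k, (1 - phat k x)) =
      g x + R x * (1 - ∏ k ∈ Finset.univ.erase i, (1 - phat k x)) := by
    intro x
    have hsplit : (∏ k, (1 - phat k x)) =
        (1 - phat i x) * ∏ k ∈ Finset.univ.erase i, (1 - phat k x) :=
      (Finset.mul_prod_erase Finset.univ _ (Finset.mem_univ i)).symm
    rw [hsplit, hg]; ring
  have hgint : IntegrableOn g F := by
    refine IntegrableOn.congr_fun (hint1.sub hint3) ?_ hF
    intro x hx
    simp only [Pi.sub_apply]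
    linarith [hpt x]
  have h1 : ∫ x in F, R x * (1 - ∏ k, (1 - phat k x)) =
      (∫ x in F, g x) +
      ∫ x in F, R x * (1 - ∏ k ∈ Finset.univ.erase i, (1 - phat k x)) := by
    rw [← integral_add hgint hint3]
    exact setIntegral_congr_fun hF fun x _ => hpt x
  -- ∫_F g = ∫_V g
  have hFsplit : F = V ∪ (F \ V) := by
    rw [Set.union_diff_cancel hVF]
  have h2 : ∫ x in F, g x = ∫ x in V, g x := by
    have : ∫ x in F, g x = ∫ x in V ∪ (F \ V), g x := by rw [← hFsplit]
    rw [this, setIntegral_union Set.disjoint_sdiff_right (hF.diff hV)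
      (hgint.mono_set hVF) (hgint.mono_set Set.diff_subset)]
    have : ∫ x in F \ V, g x = 0 := by
      apply setIntegral_eq_zero_of_forall_eq_zero
      intro x hx
      simp [hg, hinv x hx]
    rw [this, add_zero]
  -- on V, g = R * ∏_B * pi
  have h3 : ∫ x in V, g x = ∫ x in V, R x * (∏ k ∈ B, (1 - phat k x)) * pi x := by
    apply setIntegral_congr_fun hV
    intro x hx
    have hprod : (∏ k ∈ Finset.univ.erase i, (1 - phat k x)) =
        ∏ k ∈ B, (1 - phat k x) := by
      symm
      apply Finset.prod_subset
      · intro k hk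
        exact Finset.mem_erase.2 ⟨fun h => hiB (h ▸ hk), Finset.mem_univ k⟩
      · intro k hk hkB
        have hkC : k ∈ C := by
          rw [hC]
          simp only [Finset.mem_sdiff, Finset.mem_univ, Finset.mem_insert, true_and]
          push_neg
          exact ⟨(Finset.mem_erase.1 hk).1, hkB⟩
        rw [hCzero x hx k hkC]; ring
    simp only [hg, hprod, hvis x hx]
  rw [h1, h2, h3]
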